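/- Let G : ℝ^k → ℝ^n, G(z) = W^{(d)} σ(W^{(d-1)} ⋯ σ(W^{(1)} z)), be a ReLU network with layer widths k = k₀ ≤ k₁, …, k_{d-1}, k_d = n, where σ(t) = max(t,0) is applied componentwise. Then the range of G is contained in a union of at most N polyhedral convex cones, each of dimension at most k, where log N ≤ k(d−1) log(2e·k̄/k) with k̄ := (∏_{ℓ=1}^{d-1} k_ℓ)^{1/(d-1)}. -/

import Mathlib

/-- The ReLU network `z ↦ W^{(i+1)} σ(W^{(i)} ⋯ σ(W^{(1)} z))` (depth `i+1`). -/
def reluNet (kk : ℕ → ℕ) (W : ∀ i : ℕ, Matrix (Fin (kk (i + 1))) (Fin (kk i)) ℝ) :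
    (i : ℕ) → (Fin (kk 0) → ℝ) → (Fin (kk (i + 1)) → ℝ)
  | 0, z => (W 0).mulVec z
  | (i + 1), z => (W (i + 1)).mulVec (fun j => max (reluNet kk W i z j) 0)

open Finset

namespace Stmt9Aux

noncomputable section

def maskL {n : ℕ} (b : Fin n → Bool) : (Fin n → ℝ) →ₗ[ℝ] (Fin n → ℝ) where
  toFun v := fun j => if b j then v j else 0
  map_add' u v := by funext j; by_cases h : b j <;> simp [h]
  map_smul' c v := by funext j; by_cases h : b j <;> simp [h]

@[simp] lemma maskL_apply {n : ℕ} (b : Fin n → Bool) (v : Fin n → ℝ) (j : Fin n) :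
    maskL b v j = if b j then v j else 0 := rfl

variable (kk : ℕ → ℕ) (W : ∀ i : ℕ, Matrix (Fin (kk (i + 1))) (Fin (kk i)) ℝ)

def linNet (ε : ∀ i : ℕ, Fin (kk (i + 1)) → Bool) :
    (i : ℕ) → ((Fin (kk 0) → ℝ) →ₗ[ℝ] (Fin (kk (i + 1)) → ℝ))
  | 0 => (W 0).mulVecLin
  | (i + 1) => ((W (i + 1)).mulVecLin).comp ((maskL (ε i)).comp (linNet ε i))

def patt (z : Fin (kk 0) → ℝ) (i : ℕ) (j : Fin (kk (i + 1))) : Bool :=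
  decide (0 < reluNet kk W i z j)

lemma linNet_congr (ε ε' : ∀ i : ℕ, Fin (kk (i + 1)) → Bool) (i : ℕ)
    (h : ∀ j < i, ε j = ε' j) : linNet kk W ε i = linNet kk W ε' i := by
  induction i with
  | zero => rfl
  | succ i ih =>
    show ((W (i + 1)).mulVecLin).comp ((maskL (ε i)).comp (linNet kk W ε i))
      = ((W (i + 1)).mulVecLin).comp ((maskL (ε' i)).comp (linNet kk W ε' i))
    rw [ih (fun j hj => h j (Nat.lt_succ_of_lt hj)), h i (Nat.lt_succ_self i)]

lemma reluNet_eq_linNet (z : Fin (kk 0) → ℝ) (i : ℕ) :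
    reluNet kk W i z = linNet kk W (patt kk W z) i z := by
  induction i with
  | zero => rfl
  | succ i ih =>
    show (W (i + 1)).mulVec (fun j => max (reluNet kk W i z j) 0)
      = (W (i + 1)).mulVecLin (maskL (patt kk W z i) (linNet kk W (patt kk W z) i z))
    have hv : (fun j => max (reluNet kk W i z j) 0)
        = maskL (patt kk W z i) (linNet kk W (patt kk W z) i z) := by
      funext j
      rw [maskL_apply, ← ih]
      by_cases h : 0 < reluNet kk W i z j
      · simp [patt, h, max_eq_left h.le]
      · simp [patt, h, max_eq_right (not_lt.1 h)]
    rw [Matrix.mulVecLin_apply, hv]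

lemma subspace_polyhedral {n : ℕ} (V : Submodule ℝ (Fin n → ℝ)) :
    ∃ (M : ℕ) (φ : Fin M → ((Fin n → ℝ) →ₗ[ℝ] ℝ)),
      (V : Set (Fin n → ℝ)) = {x | ∀ m, 0 ≤ φ m x} := by
  classical
  set Q := (Fin n → ℝ) ⧸ V with hQ
  set r := Module.finrank ℝ Q with hr
  let B : Module.Basis (Fin r) ℝ Q := Module.finBasis ℝ Q
  let g : Fin r → ((Fin n → ℝ) →ₗ[ℝ] ℝ) := fun j => (B.coord j).comp V.mkQ
  refine ⟨r + r, fun m => Sum.elim g (fun j => -(g j)) (finSumFinEquiv.symm m), ?_⟩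
  ext x
  simp only [SetLike.mem_coe, Set.mem_setOf_eq]
  constructor
  · intro hx m
    have hq : V.mkQ x = 0 := by
      rw [Submodule.mkQ_apply, Submodule.Quotient.mk_eq_zero]; exact hx
    rcases (finSumFinEquiv.symm m) with j | j <;> simp [g, hq]
  · intro h
    have hz : ∀ j : Fin r, B.coord j (V.mkQ x) = 0 := by
      intro j
      have h1 := h (finSumFinEquiv (Sum.inl j))
      have h2 := h (finSumFinEquiv (Sum.inr j))
      rw [Equiv.symm_apply_apply] at h1 h2
      simp only [Sum.elim_inl, Sum.elim_inr, LinearMap.neg_apply, neg_nonneg] at h1 h2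
      exact le_antisymm h2 h1
    have hq : V.mkQ x = 0 := B.forall_coord_eq_zero_iff.mp hz
    rwa [Submodule.mkQ_apply, Submodule.Quotient.mk_eq_zero] at hq


end

variable {E : Type*} [AddCommGroup E] [Module ℝ E]

def Realized (m : ℕ) (f : Fin m → (E →ₗ[ℝ] ℝ)) (V : Submodule ℝ E) : Set (Fin m → Bool) :=
  {p | ∃ x ∈ V, ∀ i, p i = decide (0 < f i x)}

lemma pattern_ivt {m : ℕ} (f : Fin (m + 1) → (E →ₗ[ℝ] ℝ)) (V : Submodule ℝ E)
    {a b : E} (ha : a ∈ V) (hb : b ∈ V)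
    (hfa : 0 < f (Fin.last m) a) (hfb : f (Fin.last m) b ≤ 0)
    (hp : ∀ i : Fin m, (0 < f i.castSucc a ↔ 0 < f i.castSucc b)) :
    ∃ c ∈ V ⊓ LinearMap.ker (f (Fin.last m)),
      ∀ i : Fin m, (0 < f i.castSucc c ↔ 0 < f i.castSucc a) := by
  set u := f (Fin.last m) a with hu
  set v := f (Fin.last m) b with hv
  have huv : 0 < u - v := by linarith
  set t : ℝ := u / (u - v) with ht
  have ht0 : 0 < t := div_pos hfa huv
  have ht1 : t ≤ 1 := by rw [div_le_one huv]; linarith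
  refine ⟨(1 - t) • a + t • b, ⟨V.add_mem (V.smul_mem _ ha) (V.smul_mem _ hb), ?_⟩, ?_⟩
  · have : f (Fin.last m) ((1 - t) • a + t • b) = (1 - t) * u + t * v := by
      simp [map_add, map_smul, smul_eq_mul, hu, hv]
    show _ ∈ LinearMap.ker (f (Fin.last m))
    rw [LinearMap.mem_ker, this, ht]
    field_simp
    ring
  · intro i
    have hc : f i.castSucc ((1 - t) • a + t • b)
        = (1 - t) * f i.castSucc a + t * f i.castSucc b := by
      simp [map_add, map_smul, smul_eq_mul]
    by_cases hia : 0 < f i.castSucc a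
    · have hib := (hp i).1 hia
      have : 0 < f i.castSucc ((1 - t) • a + t • b) := by
        rw [hc]; nlinarith
      exact ⟨fun _ => hia, fun _ => this⟩
    · have hib : ¬ 0 < f i.castSucc b := fun h => hia ((hp i).2 h)
      push_neg at hia hib
      have : f i.castSucc ((1 - t) • a + t • b) ≤ 0 := by
        rw [hc]; nlinarith
      constructor
      · intro h; exact absurd h (not_lt.mpr this)
      · intro h; exact absurd h (not_lt.mpr hia)
  
lemma sum_choose_succ (m r : ℕ) :
    ∑ i ∈ range (r + 1), (m + 1).choose i
      = ∑ i ∈ range (r + 1), m.choose i + ∑ i ∈ range r, m.choose i := by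
  induction r with
  | zero => simp
  | succ r ih =>
    rw [sum_range_succ, ih, Nat.choose_succ_succ', sum_range_succ (fun i => m.choose i) (r + 1),
      sum_range_succ (fun i => m.choose i) r]
    omega

variable [FiniteDimensional ℝ E]

lemma card_realized_le :
    ∀ (m : ℕ) (f : Fin m → (E →ₗ[ℝ] ℝ)) (V : Submodule ℝ E),
      Nat.card (Realized m f V) ≤ ∑ i ∈ range (Module.finrank ℝ V + 1), m.choose i := by
  intro m
  induction m with
  | zero =>
    intro f V
    have h1 : Nat.card (Realized 0 f V) ≤ Nat.card (Fin 0 → Bool) :=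
      Nat.card_le_card_of_injective Subtype.val Subtype.val_injective
    have h2 : Nat.card (Fin 0 → Bool) = 1 := by simp [Nat.card_eq_fintype_card]
    have h3 : (1 : ℕ) ≤ ∑ i ∈ range (Module.finrank ℝ V + 1), Nat.choose 0 i := by
      have : (0 : ℕ) ∈ range (Module.finrank ℝ V + 1) := by simp
      simpa using Finset.single_le_sum (f := fun i => Nat.choose 0 i)
        (fun _ _ => Nat.zero_le _) this
    omega
  | succ m ih =>
    intro f V
    set r := Module.finrank ℝ V with hr
    have keyV : ∀ p ∈ Realized (m + 1) f V,
        (fun i : Fin m => p i.castSucc) ∈ Realized m (fun i => f i.castSucc) V := by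
      rintro p ⟨x, hxV, hx⟩; exact ⟨x, hxV, fun i => hx i.castSucc⟩
    by_cases hc : ∀ x ∈ V, f (Fin.last m) x = 0
    · have hlast : ∀ p ∈ Realized (m + 1) f V, p (Fin.last m) = false := by
        rintro p ⟨x, hxV, hx⟩
        rw [hx (Fin.last m), hc x hxV]; simp
      let F : Realized (m + 1) f V → Realized m (fun i => f i.castSucc) V :=
        fun p => ⟨fun i => p.1 i.castSucc, keyV p.1 p.2⟩
      have hF : Function.Injective F := by
        rintro ⟨p, hp⟩ ⟨q, hq⟩ h
        simp only [F, Subtype.mk.injEq] at h ⊢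
        funext i
        refine Fin.lastCases ?_ (fun j => ?_) i
        · rw [hlast p hp, hlast q hq]
        · exact congrFun h j
      calc Nat.card (Realized (m + 1) f V)
          ≤ Nat.card (Realized m (fun i => f i.castSucc) V) :=
            Nat.card_le_card_of_injective F hF
        _ ≤ ∑ i ∈ range (r + 1), m.choose i := ih _ _
        _ ≤ ∑ i ∈ range (r + 1), (m + 1).choose i :=
            Finset.sum_le_sum (fun i _ => Nat.choose_le_choose i (Nat.le_succ m))
    · push_neg at hc
      obtain ⟨x₀, hx₀V, hx₀⟩ := hc
      set H := V ⊓ LinearMap.ker (f (Fin.last m)) with hHdef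
      have hHV : H < V := by
        refine lt_of_le_of_ne inf_le_left (fun h => hx₀ ?_)
        have hm : x₀ ∈ H := h ▸ hx₀V
        exact hm.2
      have hlt := Submodule.finrank_lt_finrank_of_lt hHV
      have hrH : Module.finrank ℝ H + 1 ≤ r := by omega
      classical
      have keyH : ∀ p ∈ Realized (m + 1) f V, p (Fin.last m) = false →
          (∃ q ∈ Realized (m + 1) f V, q (Fin.last m) = true ∧
            ∀ i : Fin m, q i.castSucc = p i.castSucc) →
          (fun i : Fin m => p i.castSucc) ∈ Realized m (fun i => f i.castSucc) H := by
        rintro p ⟨x, hxV, hx⟩ hpl ⟨q, ⟨y, hyV, hy⟩, hql, hqp⟩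
        have hfy : 0 < f (Fin.last m) y := by
          have h1 := hy (Fin.last m); rw [hql] at h1
          exact of_decide_eq_true h1.symm
        have hfx : f (Fin.last m) x ≤ 0 := by
          have h1 := hx (Fin.last m); rw [hpl] at h1
          exact not_lt.mp (of_decide_eq_false h1.symm)
        have hpat : ∀ i : Fin m, (0 < f i.castSucc y ↔ 0 < f i.castSucc x) := by
          intro i
          have h1 := (hy i.castSucc).symm
          have h2 := (hx i.castSucc).symm
          rw [hqp i] at h1
          rw [← h2] at h1
          exact (decide_eq_decide.mp h1.symm).symm
        obtain ⟨c, hcH, hcp⟩ := pattern_ivt f V hyV hxV hfy hfx hpat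
        refine ⟨c, hcH, fun i => ?_⟩
        show p i.castSucc = decide (0 < f i.castSucc c)
        rw [← hqp i, hy i.castSucc]
        exact (decide_eq_decide.mpr (hcp i)).symm
      let F : Realized (m + 1) f V →
          (Realized m (fun i => f i.castSucc) V) ⊕ (Realized m (fun i => f i.castSucc) H) :=
        fun p =>
          if h : p.1 (Fin.last m) = false ∧ ∃ q ∈ Realized (m + 1) f V,
              q (Fin.last m) = true ∧ ∀ i : Fin m, q i.castSucc = p.1 i.castSucc
          then Sum.inr ⟨_, keyH p.1 p.2 h.1 h.2⟩
          else Sum.inl ⟨_, keyV p.1 p.2⟩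
      have hF : Function.Injective F := by
        rintro ⟨p, hp⟩ ⟨p', hp'⟩ h
        simp only [F] at h
        have hext : (∀ i : Fin m, p i.castSucc = p' i.castSucc) → p (Fin.last m) = p' (Fin.last m) → p = p' := by
          intro hd hl; funext i
          refine Fin.lastCases hl (fun j => hd j) i
        by_cases h1 : p (Fin.last m) = false ∧ ∃ q ∈ Realized (m + 1) f V,
            q (Fin.last m) = true ∧ ∀ i : Fin m, q i.castSucc = p i.castSucc <;>
          by_cases h2 : p' (Fin.last m) = false ∧ ∃ q ∈ Realized (m + 1) f V,
            q (Fin.last m) = true ∧ ∀ i : Fin m, q i.castSucc = p' i.castSucc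
        · rw [dif_pos h1, dif_pos h2] at h
          have hd := Subtype.mk.injEq .. ▸ Sum.inr.inj h
          exact Subtype.ext (hext (fun i => congrFun hd i) (by rw [h1.1, h2.1]))
        · rw [dif_pos h1, dif_neg h2] at h
          exact absurd h (by simp)
        · rw [dif_neg h1, dif_pos h2] at h
          exact absurd h (by simp)
        · rw [dif_neg h1, dif_neg h2] at h
          have hd := Subtype.mk.injEq .. ▸ Sum.inl.inj h
          have hdrop : ∀ i : Fin m, p i.castSucc = p' i.castSucc := fun i => congrFun hd i
          refine Subtype.ext (hext hdrop ?_)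
          cases hbp : p (Fin.last m) <;> cases hbp' : p' (Fin.last m)
          · rfl
          · exact absurd ⟨hbp, p', hp', hbp', fun i => (hdrop i).symm⟩ h1
          · exact absurd ⟨hbp', p, hp, hbp, hdrop⟩ h2
          · rfl
      calc Nat.card (Realized (m + 1) f V)
          ≤ Nat.card ((Realized m (fun i => f i.castSucc) V) ⊕
              (Realized m (fun i => f i.castSucc) H)) :=
            Nat.card_le_card_of_injective F hF
        _ = Nat.card (Realized m (fun i => f i.castSucc) V)
            + Nat.card (Realized m (fun i => f i.castSucc) H) := Nat.card_sum
        _ ≤ (∑ i ∈ range (r + 1), m.choose i) + ∑ i ∈ range (Module.finrank ℝ H + 1), m.choose i :=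
            add_le_add (ih _ _) (ih _ _)
        _ ≤ (∑ i ∈ range (r + 1), m.choose i) + ∑ i ∈ range r, m.choose i := by
            refine Nat.add_le_add_left (Finset.sum_le_sum_of_subset ?_) _
            exact Finset.range_subset_range.mpr hrH
        _ = ∑ i ∈ range (r + 1), (m + 1).choose i := (sum_choose_succ m r).symm



section

variable (kk : ℕ → ℕ) (W : ∀ i : ℕ, Matrix (Fin (kk (i + 1))) (Fin (kk i)) ℝ)

abbrev PatType (ℓ : ℕ) := ∀ i : Fin ℓ, Fin (kk (i.1 + 1)) → Bool

noncomputable def pattTo (ℓ : ℕ) (z : Fin (kk 0) → ℝ) : PatType kk ℓ :=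
  fun i => patt kk W z i.1

def extPat {ℓ : ℕ} (q : PatType kk ℓ) : ∀ i : ℕ, Fin (kk (i + 1)) → Bool :=
  fun i => if h : i < ℓ then q ⟨i, h⟩ else fun _ => false

lemma card_range_pattTo_le (ℓ : ℕ) :
    Nat.card (Set.range (pattTo kk W ℓ)) ≤
      ∏ i ∈ range ℓ, (∑ j ∈ range (kk 0 + 1), (kk (i + 1)).choose j) := by
  classical
  induction ℓ with
  | zero =>
    have h1 : Nat.card (Set.range (pattTo kk W 0)) ≤ Nat.card (PatType kk 0) :=
      Nat.card_le_card_of_injective Subtype.val Subtype.val_injective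
    have h2 : Nat.card (PatType kk 0) = 1 := by
      simp [Nat.card_eq_fintype_card]
    simpa [h2] using h1
  | succ ℓ ih =>
    set B : ℕ := ∑ j ∈ range (kk 0 + 1), (kk (ℓ + 1)).choose j with hB
    have hfin1 : (Set.range (pattTo kk W (ℓ + 1))).Finite := Set.toFinite _
    have hfin0 : (Set.range (pattTo kk W ℓ)).Finite := Set.toFinite _
    set T1 : Finset (PatType kk (ℓ + 1)) := hfin1.toFinset with hT1
    set T0 : Finset (PatType kk ℓ) := hfin0.toFinset with hT0
    set trunc : PatType kk (ℓ + 1) → PatType kk ℓ := fun p i => p i.castSucc with htrunc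
    have hmaps : ∀ p ∈ T1, trunc p ∈ T0 := by
      intro p hp
      rw [hT1, Set.Finite.mem_toFinset] at hp
      obtain ⟨z, hz⟩ := hp
      rw [hT0, Set.Finite.mem_toFinset]
      exact ⟨z, by rw [← hz]; rfl⟩
    have hfiber : ∀ b ∈ T1.image trunc, (T1.filter (fun p => trunc p = b)).card ≤ B := by
      intro b _
      set fb : Fin (kk (ℓ + 1)) → ((Fin (kk 0) → ℝ) →ₗ[ℝ] ℝ) :=
        fun j => (LinearMap.proj j).comp (linNet kk W (extPat kk b) ℓ) with hfb
      have hmem : ∀ p ∈ T1.filter (fun p => trunc p = b),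
          p (Fin.last ℓ) ∈ Realized (kk (ℓ + 1)) fb (⊤ : Submodule ℝ (Fin (kk 0) → ℝ)) := by
        intro p hp
        rw [Finset.mem_filter, hT1, Set.Finite.mem_toFinset] at hp
        obtain ⟨⟨z, hz⟩, hpb⟩ := hp
        refine ⟨z, trivial, fun j => ?_⟩
        have hcong : linNet kk W (extPat kk b) ℓ = linNet kk W (patt kk W z) ℓ := by
          refine linNet_congr kk W _ _ ℓ (fun jj hjj => ?_)
          show extPat kk b jj = patt kk W z jj
          rw [extPat, dif_pos hjj]
          rw [← hpb, ← hz]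
          rfl
        have h1 : p (Fin.last ℓ) j = decide (0 < reluNet kk W ℓ z j) := by
          rw [← hz]; rfl
        rw [h1, reluNet_eq_linNet]
        simp only [hfb, LinearMap.comp_apply, LinearMap.proj_apply, hcong]
      set g : {p // p ∈ T1.filter (fun p => trunc p = b)} →
          Realized (kk (ℓ + 1)) fb (⊤ : Submodule ℝ (Fin (kk 0) → ℝ)) :=
        fun p => ⟨p.1 (Fin.last ℓ), hmem p.1 p.2⟩ with hg
      have hginj : Function.Injective g := by
        rintro ⟨p, hp⟩ ⟨p', hp'⟩ h
        rw [Finset.mem_filter] at hp hp'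
        have hlast : p (Fin.last ℓ) = p' (Fin.last ℓ) := congrArg Subtype.val h
        refine Subtype.ext (funext fun i => ?_)
        refine Fin.lastCases hlast (fun j => ?_) i
        have := congrFun (hp.2.trans hp'.2.symm) j
        exact this
      calc (T1.filter (fun p => trunc p = b)).card
          = Nat.card {p // p ∈ T1.filter (fun p => trunc p = b)} :=
            (Nat.card_eq_finsetCard _).symm
        _ ≤ Nat.card (Realized (kk (ℓ + 1)) fb (⊤ : Submodule ℝ (Fin (kk 0) → ℝ))) :=
            Nat.card_le_card_of_injective g hginj
        _ ≤ ∑ j ∈ range (Module.finrank ℝ (⊤ : Submodule ℝ (Fin (kk 0) → ℝ)) + 1),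
              (kk (ℓ + 1)).choose j := card_realized_le _ _ _
        _ = B := by rw [finrank_top, Module.finrank_pi, Fintype.card_fin]
    have hcard : T1.card ≤ B * (T1.image trunc).card :=
      Finset.card_le_mul_card_image T1 B hfiber
    have himg : (T1.image trunc).card ≤ T0.card :=
      Finset.card_le_card (Finset.image_subset_iff.mpr hmaps)
    have hN1 : Nat.card (Set.range (pattTo kk W (ℓ + 1))) = T1.card := by
      rw [Nat.card_coe_set_eq, Set.ncard_eq_toFinset_card _ hfin1]
    have hN0 : Nat.card (Set.range (pattTo kk W ℓ)) = T0.card := by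
      rw [Nat.card_coe_set_eq, Set.ncard_eq_toFinset_card _ hfin0]
    rw [prod_range_succ, hN1]
    calc T1.card ≤ B * (T1.image trunc).card := hcard
      _ ≤ B * T0.card := Nat.mul_le_mul_left B himg
      _ = T0.card * B := Nat.mul_comm _ _
      _ ≤ (∏ i ∈ range ℓ, (∑ j ∈ range (kk 0 + 1), (kk (i + 1)).choose j)) * B :=
          Nat.mul_le_mul_right B (by rw [← hN0]; exact ih)

end


lemma sum_choose_le (k m : ℕ) (hk : 1 ≤ k) (hkm : k ≤ m) :
    ((∑ i ∈ range (k + 1), m.choose i : ℕ) : ℝ) ≤ (2 * Real.exp 1 * m / k) ^ k := by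
  have hm0 : 0 < m := hk.trans hkm
  have hmr : (0 : ℝ) < m := by exact_mod_cast hm0
  have hkr : (0 : ℝ) < k := by exact_mod_cast hk
  set x : ℝ := k / m with hx
  have hx0 : 0 < x := div_pos hkr hmr
  have hx1 : x ≤ 1 := by rw [hx, div_le_one hmr]; exact_mod_cast hkm
  set S : ℝ := ((∑ i ∈ range (k + 1), m.choose i : ℕ) : ℝ) with hS
  have hSx : S * x ^ k ≤ Real.exp 1 ^ k := by
    have h1 : S * x ^ k = ∑ i ∈ range (k + 1), (m.choose i : ℝ) * x ^ k := by
      rw [hS]; push_cast; rw [Finset.sum_mul]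
    have h2 : ∑ i ∈ range (k + 1), (m.choose i : ℝ) * x ^ k
        ≤ ∑ i ∈ range (k + 1), (m.choose i : ℝ) * x ^ i := by
      refine Finset.sum_le_sum fun i hi => ?_
      refine mul_le_mul_of_nonneg_left ?_ (by positivity)
      exact pow_le_pow_of_le_one hx0.le hx1 (Nat.lt_succ_iff.mp (Finset.mem_range.mp hi))
    have h3 : ∑ i ∈ range (k + 1), (m.choose i : ℝ) * x ^ i
        ≤ ∑ i ∈ range (m + 1), (m.choose i : ℝ) * x ^ i := by
      refine Finset.sum_le_sum_of_subset_of_nonneg (Finset.range_subset_range.mpr (by omega)) ?_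
      intro i _ _; positivity
    have h4 : ∑ i ∈ range (m + 1), (m.choose i : ℝ) * x ^ i = (x + 1) ^ m := by
      rw [add_pow]
      exact Finset.sum_congr rfl fun i _ => by rw [one_pow, mul_one, mul_comm]
    have h5 : (x + 1) ^ m ≤ Real.exp x ^ m :=
      pow_le_pow_left₀ (by positivity) (by linarith [Real.add_one_le_exp x]) m
    have hmx : (m : ℝ) * x = k := by rw [hx]; field_simp
    have h6 : Real.exp x ^ m = Real.exp 1 ^ k := by
      rw [← Real.exp_nat_mul, hmx, ← Real.exp_nat_mul, mul_one]
    linarith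
  have hxk : 0 < x ^ k := pow_pos hx0 k
  have h7 : S ≤ Real.exp 1 ^ k / x ^ k := (le_div_iff₀ hxk).mpr hSx
  have h8 : Real.exp 1 ^ k / x ^ k = (Real.exp 1 * m / k) ^ k := by
    rw [← div_pow, hx, div_div_eq_mul_div]
  have h9 : (Real.exp 1 * m / k) ^ k ≤ (2 * Real.exp 1 * m / k) ^ k := by
    have hb : Real.exp 1 * m / k ≤ 2 * Real.exp 1 * m / k := by
      have he : 0 < Real.exp 1 * m / k := by positivity
      rw [div_le_div_iff₀ hkr hkr] at *
      nlinarith [mul_pos (mul_pos (Real.exp_pos 1) hmr) hkr]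
    exact pow_le_pow_left₀ (by positivity) hb k
  linarith

end Stmt9Aux

theorem stmt9 (k : ℕ) (hk2 : 2 ≤ k) (d' : ℕ) (kk : ℕ → ℕ) (hk0 : kk 0 = k)
    (hkw : ∀ ℓ, 1 ≤ ℓ → ℓ ≤ d' + 1 → k ≤ kk ℓ)
    (W : ∀ i : ℕ, Matrix (Fin (kk (i + 1))) (Fin (kk i)) ℝ) :
    ∃ (N : ℕ) (𝒞 : Fin N → Set (Fin (kk (d' + 1)) → ℝ)),
      Set.range (reluNet kk W d') ⊆ (⋃ i, 𝒞 i) ∧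
      (∀ i, Convex ℝ (𝒞 i)) ∧
      (∀ i, ∀ x ∈ 𝒞 i, ∀ t : ℝ, 0 ≤ t → t • x ∈ 𝒞 i) ∧
      (∀ i, ∃ (M : ℕ) (φ : Fin M → ((Fin (kk (d' + 1)) → ℝ) →ₗ[ℝ] ℝ)),
        𝒞 i = {x | ∀ m, 0 ≤ φ m x}) ∧
      (∀ i, ∃ V : Submodule ℝ (Fin (kk (d' + 1)) → ℝ),
        𝒞 i ⊆ (V : Set (Fin (kk (d' + 1)) → ℝ)) ∧ Module.finrank ℝ V ≤ k) ∧
      Real.log N ≤ (k : ℝ) * d' *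
        Real.log (2 * Real.exp 1 *
          ((∏ ℓ ∈ Finset.Icc 1 d', (kk ℓ : ℝ)) ^ ((1 : ℝ) / d')) / k) := by
  classical
  have hfin : (Set.range (Stmt9Aux.pattTo kk W d')).Finite := Set.toFinite _
  set T := hfin.toFinset with hT
  set e := T.equivFin with he
  refine ⟨T.card, fun i => ↑(LinearMap.range
    (Stmt9Aux.linNet kk W (Stmt9Aux.extPat kk ((e.symm i : T) : Stmt9Aux.PatType kk d')) d')),
    ?_, ?_, ?_, ?_, ?_, ?_⟩
  · -- coverage
    rintro y ⟨z, rfl⟩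
    have hq : Stmt9Aux.pattTo kk W d' z ∈ T := by
      rw [hT, Set.Finite.mem_toFinset]; exact ⟨z, rfl⟩
    refine Set.mem_iUnion.mpr ⟨e ⟨_, hq⟩, ?_⟩
    rw [Equiv.symm_apply_apply]
    refine ⟨z, ?_⟩
    have hcong : Stmt9Aux.linNet kk W (Stmt9Aux.extPat kk (Stmt9Aux.pattTo kk W d' z)) d'
        = Stmt9Aux.linNet kk W (Stmt9Aux.patt kk W z) d' := by
      refine Stmt9Aux.linNet_congr kk W _ _ d' (fun j hj => ?_)
      show Stmt9Aux.extPat kk (Stmt9Aux.pattTo kk W d' z) j = Stmt9Aux.patt kk W z j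
      rw [Stmt9Aux.extPat, dif_pos hj]
      rfl
    rw [hcong, ← Stmt9Aux.reluNet_eq_linNet]
  · intro i
    exact (LinearMap.range _).convex
  · intro i x hx t ht
    exact Submodule.smul_mem _ t hx
  · intro i
    exact Stmt9Aux.subspace_polyhedral _
  · intro i
    refine ⟨LinearMap.range _, subset_rfl, ?_⟩
    calc Module.finrank ℝ (LinearMap.range (Stmt9Aux.linNet kk W _ d'))
        ≤ Module.finrank ℝ (Fin (kk 0) → ℝ) := LinearMap.finrank_range_le _
      _ = kk 0 := by rw [Module.finrank_pi, Fintype.card_fin]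
      _ = k := hk0
  · -- the counting bound
    have hk1 : 1 ≤ k := by omega
    have hkr : (0 : ℝ) < k := by
      have : 0 < k := by omega
      exact_mod_cast this
    have hNpos : 0 < T.card := by
      refine Finset.card_pos.mpr ⟨Stmt9Aux.pattTo kk W d' 0, ?_⟩
      rw [hT, Set.Finite.mem_toFinset]; exact ⟨0, rfl⟩
    have hNle : T.card ≤ ∏ i ∈ Finset.range d',
        (∑ j ∈ Finset.range (k + 1), (kk (i + 1)).choose j) := by
      have h := Stmt9Aux.card_range_pattTo_le kk W d'
      rw [Nat.card_coe_set_eq, Set.ncard_eq_toFinset_card _ hfin] at h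
      rw [← hk0]
      exact h
    have hm : ∀ i ∈ Finset.range d', k ≤ kk (i + 1) := fun i hi =>
      hkw (i + 1) (by omega) (by have := Finset.mem_range.mp hi; omega)
    have hmpos : ∀ i ∈ Finset.range d', (0 : ℝ) < (kk (i + 1) : ℝ) := by
      intro i hi
      have h1 := hm i hi
      have : 0 < kk (i + 1) := by omega
      exact_mod_cast this
    have hreal : (T.card : ℝ) ≤
        ∏ i ∈ Finset.range d', (2 * Real.exp 1 * (kk (i + 1) : ℝ) / k) ^ k := by
      calc (T.card : ℝ)
          ≤ ((∏ i ∈ Finset.range d',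
              (∑ j ∈ Finset.range (k + 1), (kk (i + 1)).choose j) : ℕ) : ℝ) := by
            exact_mod_cast hNle
        _ = ∏ i ∈ Finset.range d',
              ((∑ j ∈ Finset.range (k + 1), (kk (i + 1)).choose j : ℕ) : ℝ) := by
            push_cast; rfl
        _ ≤ ∏ i ∈ Finset.range d', (2 * Real.exp 1 * (kk (i + 1) : ℝ) / k) ^ k :=
            Finset.prod_le_prod (fun i _ => by positivity)
              (fun i hi => Stmt9Aux.sum_choose_le k _ hk1 (hm i hi))
    have hlogprod : Real.log (∏ i ∈ Finset.range d', (2 * Real.exp 1 * (kk (i + 1) : ℝ) / k) ^ k)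
        = ∑ i ∈ Finset.range d', (k : ℝ) * Real.log (2 * Real.exp 1 * (kk (i + 1) : ℝ) / k) := by
      rw [Real.log_prod]
      · exact Finset.sum_congr rfl (fun i _ => Real.log_pow _ k)
      · intro i hi
        have := hmpos i hi
        positivity
    by_cases hd0 : d' = 0
    · subst hd0
      have hT1 : T.card = 1 := by
        have : T.card ≤ 1 := by simpa using hNle
        omega
      rw [hT1]
      norm_num
    · have hd1 : 1 ≤ d' := by omega
      have hdr : (d' : ℝ) ≠ 0 := Nat.cast_ne_zero.mpr hd0
      set P := ∏ ℓ ∈ Finset.Icc 1 d', (kk ℓ : ℝ) with hP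
      have hPr : P = ∏ i ∈ Finset.range d', (kk (i + 1) : ℝ) := by
        rw [hP, ← Finset.Ico_add_one_right_eq_Icc, Finset.prod_Ico_eq_prod_range]
        exact Finset.prod_congr rfl (fun i _ => by rw [Nat.add_comm])
      have hPpos : 0 < P := by rw [hPr]; exact Finset.prod_pos hmpos
      have hlogP : Real.log P = ∑ i ∈ Finset.range d', Real.log (kk (i + 1) : ℝ) := by
        rw [hPr, Real.log_prod (fun i hi => (hmpos i hi).ne')]
      have hterm : ∀ i ∈ Finset.range d', Real.log (2 * Real.exp 1 * (kk (i + 1) : ℝ) / k)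
          = Real.log 2 + 1 + Real.log (kk (i + 1) : ℝ) - Real.log k := by
        intro i hi
        rw [Real.log_div (mul_ne_zero (mul_ne_zero two_ne_zero (Real.exp_ne_zero 1))
              (hmpos i hi).ne') hkr.ne',
            Real.log_mul (mul_ne_zero two_ne_zero (Real.exp_ne_zero 1)) (hmpos i hi).ne',
            Real.log_mul two_ne_zero (Real.exp_ne_zero 1), Real.log_exp]
      have hsum : ∑ i ∈ Finset.range d',
            (k : ℝ) * (Real.log 2 + 1 + Real.log (kk (i + 1) : ℝ) - Real.log k)
          = (k : ℝ) * ((d' : ℝ) * (Real.log 2 + 1 - Real.log k)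
              + ∑ i ∈ Finset.range d', Real.log (kk (i + 1) : ℝ)) := by
        rw [← Finset.mul_sum]
        congr 1
        have hterm2 : ∀ i ∈ Finset.range d',
            Real.log 2 + 1 + Real.log (kk (i + 1) : ℝ) - Real.log k
              = (Real.log 2 + 1 - Real.log k) + Real.log (kk (i + 1) : ℝ) :=
          fun i _ => by ring
        rw [Finset.sum_congr rfl hterm2, Finset.sum_add_distrib, Finset.sum_const,
          Finset.card_range, nsmul_eq_mul]
      have hRHS : (k : ℝ) * d' * Real.log (2 * Real.exp 1 * P ^ ((1 : ℝ) / d') / k)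
          = ∑ i ∈ Finset.range d',
              (k : ℝ) * (Real.log 2 + 1 + Real.log (kk (i + 1) : ℝ) - Real.log k) := by
        have h1 : Real.log (2 * Real.exp 1 * P ^ ((1 : ℝ) / d') / k)
            = Real.log 2 + 1 + (1 / d') * Real.log P - Real.log k := by
          rw [Real.log_div (mul_ne_zero (mul_ne_zero two_ne_zero (Real.exp_ne_zero 1))
                (Real.rpow_pos_of_pos hPpos _).ne') hkr.ne',
              Real.log_mul (mul_ne_zero two_ne_zero (Real.exp_ne_zero 1))
                (Real.rpow_pos_of_pos hPpos _).ne',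
              Real.log_mul two_ne_zero (Real.exp_ne_zero 1), Real.log_exp,
              Real.log_rpow hPpos]
        rw [h1, hlogP, hsum]
        field_simp
        ring
      calc Real.log (T.card : ℝ)
          ≤ Real.log (∏ i ∈ Finset.range d', (2 * Real.exp 1 * (kk (i + 1) : ℝ) / k) ^ k) := by
            refine Real.log_le_log (by exact_mod_cast hNpos) hreal
        _ = ∑ i ∈ Finset.range d', (k : ℝ) * Real.log (2 * Real.exp 1 * (kk (i + 1) : ℝ) / k) :=
            hlogprod
        _ = ∑ i ∈ Finset.range d',
              (k : ℝ) * (Real.log 2 + 1 + Real.log (kk (i + 1) : ℝ) - Real.log k) :=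
            Finset.sum_congr rfl (fun i hi => by rw [hterm i hi])
        _ = (k : ℝ) * d' * Real.log (2 * Real.exp 1 * P ^ ((1 : ℝ) / d') / k) := hRHS.symm
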